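/- Let k be a field of characteristic p, and F ∈ k[t₀,t₁,t₂] homogeneous of degree d with p | d. Write F = t₀H₀ + t₁H₁ + t₂H₂ and set G₀ = ∂₁H₂ − ∂₂H₁, G₁ = ∂₂H₀ − ∂₀H₂, G₂ = ∂₀H₁ − ∂₁H₀. Then G₀∂₀F + G₁∂₁F + G₂∂₂F = 0; in particular the curve F = 0 is left invariant by the degree d−2 vector field induced by G₀∂₀ + G₁∂₁ + G₂∂₂. -/

import Mathlib

open MvPolynomial

lemma euler_aux {σ : Type*} [Fintype σ] [DecidableEq σ] {R : Type*} [CommRing R]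
    {P : MvPolynomial σ R} {n : ℕ} (h : P.IsHomogeneous n) :
    ∑ i, X i * pderiv i P = n • P := by
  have key : ∀ m ∈ P.support,
      ∑ i, X i * pderiv i (monomial m (coeff m P)) = n • monomial m (coeff m P) := by
    intro m hm
    have hdeg : ∑ i, m i = n := by
      have h1 : Finsupp.weight (1 : σ → ℕ) m = n := h (MvPolynomial.mem_support_iff.mp hm)
      rw [Pi.one_def, ← Finsupp.degree_eq_weight_one (R := ℕ)] at h1
      rw [← h1]
      exact (Finset.sum_subset (Finset.subset_univ _)
        (fun i _ hi => Finsupp.notMem_support_iff.mp hi)).symm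
    have step : ∀ i : σ, X i * pderiv i (monomial m (coeff m P)) =
        monomial m (coeff m P * (m i : R)) := by
      intro i
      rw [pderiv_monomial]
      by_cases h0 : m i = 0
      · simp [h0]
      · have hle : Finsupp.single i 1 ≤ m := by
          rw [Finsupp.single_le_iff]; omega
        rw [X, monomial_mul, one_mul, add_tsub_cancel_of_le hle]
    calc ∑ i, X i * pderiv i (monomial m (coeff m P))
        = ∑ i, monomial m (coeff m P * (m i : R)) := Finset.sum_congr rfl fun i _ => step i
      _ = monomial m (coeff m P * ((∑ i, m i : ℕ) : R)) := by
          rw [Nat.cast_sum, Finset.mul_sum, map_sum]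
      _ = n • monomial m (coeff m P) := by
          rw [hdeg, smul_monomial, nsmul_eq_mul, mul_comm]
  calc ∑ i, X i * pderiv i P
      = ∑ i, ∑ m ∈ P.support, X i * pderiv i (monomial m (coeff m P)) := by
        conv_lhs => rw [P.as_sum]
        exact Finset.sum_congr rfl fun i _ => by rw [map_sum, Finset.mul_sum]
    _ = ∑ m ∈ P.support, ∑ i, X i * pderiv i (monomial m (coeff m P)) := Finset.sum_comm
    _ = ∑ m ∈ P.support, n • monomial m (coeff m P) := Finset.sum_congr rfl key
    _ = n • P := by rw [← Finset.smul_sum, ← P.as_sum]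

lemma pderiv_of_isHomogeneous_zero {σ : Type*} {R : Type*} [CommRing R]
    {P : MvPolynomial σ R} (h : P.IsHomogeneous 0) (i : σ) : pderiv i P = 0 := by
  classical
  have : P = C (coeff 0 P) := by
    ext m
    by_cases hm : m = 0
    · simp [hm]
    · have hc : coeff m P = 0 := by
        by_contra hne
        have h1 : Finsupp.weight (1 : σ → ℕ) m = 0 := h hne
        rw [Pi.one_def, ← Finsupp.degree_eq_weight_one (R := ℕ), Finsupp.degree_eq_zero_iff] at h1
        exact hm h1
      rw [hc, coeff_C, if_neg (Ne.symm hm)]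
  rw [this, pderiv_C]

/-- Let `k` have characteristic `p` and let `F = t₀H₀ + t₁H₁ + t₂H₂` be homogeneous of
degree `d` with `p ∣ d` (the `Hᵢ` homogeneous of degree `d − 1`).  With
`G₀ = ∂₁H₂ − ∂₂H₁`, `G₁ = ∂₂H₀ − ∂₀H₂`, `G₂ = ∂₀H₁ − ∂₁H₀` one has
`G₀∂₀F + G₁∂₁F + G₂∂₂F = 0`; in particular `∑ Gᵢ∂ᵢF ∈ (F)`, so the curve `{F = 0}` is
left invariant by the degree `d − 2` vector field induced by `G₀∂₀ + G₁∂₁ + G₂∂₂`. -/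
theorem curve_char_p_invariant_field (k : Type*) [Field k] (p : ℕ) [CharP k p]
    (d : ℕ) (hpd : p ∣ d)
    (H : Fin 3 → MvPolynomial (Fin 3) k) (hH : ∀ i, (H i).IsHomogeneous (d - 1))
    (F : MvPolynomial (Fin 3) k)
    (hF : F = X 0 * H 0 + X 1 * H 1 + X 2 * H 2)
    (G : Fin 3 → MvPolynomial (Fin 3) k)
    (hG0 : G 0 = pderiv 1 (H 2) - pderiv 2 (H 1))
    (hG1 : G 1 = pderiv 2 (H 0) - pderiv 0 (H 2))
    (hG2 : G 2 = pderiv 0 (H 1) - pderiv 1 (H 0)) :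
    G 0 * pderiv 0 F + G 1 * pderiv 1 F + G 2 * pderiv 2 F = 0 ∧
      G 0 * pderiv 0 F + G 1 * pderiv 1 F + G 2 * pderiv 2 F ∈ Ideal.span {F} := by
  have main : G 0 * pderiv 0 F + G 1 * pderiv 1 F + G 2 * pderiv 2 F = 0 := by
    rcases Nat.eq_zero_or_pos d with hd0 | hdpos
    · -- degree 0 case: all H i are constants, so G = 0
      have hz : ∀ i j : Fin 3, pderiv i (H j) = 0 := fun i j => by
        have := hH j; rw [hd0] at this
        exact pderiv_of_isHomogeneous_zero this i
      rw [hG0, hG1, hG2]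
      simp [hz]
    · -- Euler identities for H j
      have euler : ∀ j : Fin 3, X 0 * pderiv 0 (H j) + X 1 * pderiv 1 (H j)
          + X 2 * pderiv 2 (H j) = (d - 1) • H j := by
        intro j
        have := euler_aux (hH j)
        rwa [Fin.sum_univ_three] at this
      -- partial derivatives of F
      have ne10 : (1 : Fin 3) ≠ 0 := by decide
      have ne20 : (2 : Fin 3) ≠ 0 := by decide
      have ne01 : (0 : Fin 3) ≠ 1 := by decide
      have ne21 : (2 : Fin 3) ≠ 1 := by decide
      have ne02 : (0 : Fin 3) ≠ 2 := by decide
      have ne12 : (1 : Fin 3) ≠ 2 := by decide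
      have hD0 : pderiv 0 F = H 0 +
          (X 0 * pderiv 0 (H 0) + X 1 * pderiv 0 (H 1) + X 2 * pderiv 0 (H 2)) := by
        rw [hF, map_add, map_add, pderiv_mul, pderiv_mul, pderiv_mul, pderiv_X_self,
          pderiv_X_of_ne ne10, pderiv_X_of_ne ne20]
        ring
      have hD1 : pderiv 1 F = H 1 +
          (X 0 * pderiv 1 (H 0) + X 1 * pderiv 1 (H 1) + X 2 * pderiv 1 (H 2)) := by
        rw [hF, map_add, map_add, pderiv_mul, pderiv_mul, pderiv_mul, pderiv_X_self,
          pderiv_X_of_ne ne01, pderiv_X_of_ne ne21]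
        ring
      have hD2 : pderiv 2 F = H 2 +
          (X 0 * pderiv 2 (H 0) + X 1 * pderiv 2 (H 1) + X 2 * pderiv 2 (H 2)) := by
        rw [hF, map_add, map_add, pderiv_mul, pderiv_mul, pderiv_mul, pderiv_X_self,
          pderiv_X_of_ne ne02, pderiv_X_of_ne ne12]
        ring
      -- key ring identity
      have key : G 0 * pderiv 0 F + G 1 * pderiv 1 F + G 2 * pderiv 2 F =
          (G 0 * H 0 + G 1 * H 1 + G 2 * H 2) +
          (G 0 * (X 0 * pderiv 0 (H 0) + X 1 * pderiv 1 (H 0) + X 2 * pderiv 2 (H 0)) +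
           G 1 * (X 0 * pderiv 0 (H 1) + X 1 * pderiv 1 (H 1) + X 2 * pderiv 2 (H 1)) +
           G 2 * (X 0 * pderiv 0 (H 2) + X 1 * pderiv 1 (H 2) + X 2 * pderiv 2 (H 2))) := by
        rw [hD0, hD1, hD2, hG0, hG1, hG2]
        ring
      rw [key, euler 0, euler 1, euler 2]
      have hcast : ((d : k)) = 0 := (CharP.cast_eq_zero_iff k p d).mpr hpd
      have hsmul : ∀ Q : MvPolynomial (Fin 3) k,
          Q + (d - 1) • Q = (0 : MvPolynomial (Fin 3) k) := by
        intro Q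
        have h2 : Q + (d - 1) • Q = d • Q := by
          obtain ⟨e, he⟩ : ∃ e, d - 1 = e ∧ True := ⟨d - 1, rfl, trivial⟩
          have hd' : 1 + e = d := by omega
          rw [he.1, ← hd', add_smul, one_smul]
        rw [h2, nsmul_eq_mul, ← C_eq_coe_nat, hcast, map_zero, zero_mul]
      calc G 0 * H 0 + G 1 * H 1 + G 2 * H 2 +
            (G 0 * ((d - 1) • H 0) + G 1 * ((d - 1) • H 1) + G 2 * ((d - 1) • H 2))
          = G 0 * (H 0 + (d - 1) • H 0) + G 1 * (H 1 + (d - 1) • H 1)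
            + G 2 * (H 2 + (d - 1) • H 2) := by ring
        _ = 0 := by rw [hsmul, hsmul, hsmul]; ring
  exact ⟨main, main ▸ Ideal.zero_mem _⟩
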